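/- The trace dual ω of the standard hereditary order Δ, namely the set of e×e matrices M over K such that trace(M·N) lies in the image of R in K for every N ∈ Δ, is equal to the set of e×e matrices M over K with M i j ∈ t^{−1}·R when i < j and M i j ∈ R otherwise (for all indices 0 ≤ i, j ≤ e−1); moreover ω = y^{1−e}·Δ = {y^{1−e}·M : M ∈ Δ}, where y^{1−e} is the (1−e)-th power of the invertible matrix y. -/

import Mathlib

/-- The standard hereditary order of ramification index `e` over a DVR `R` with
uniformizer `t`, inside the `e × e` matrices over the fraction field `K`. -/
def stdHereditaryOrder (R K : Type*) [CommRing R] [Field K] [Algebra R K]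
    (t : R) (e : ℕ) : Set (Matrix (Fin e) (Fin e) K) :=
  {M | ∀ i j : Fin e,
    if (j : ℕ) < (i : ℕ) then ∃ r : R, algebraMap R K (t * r) = M i j
    else ∃ r : R, algebraMap R K r = M i j}

/-- The matrix `y`: `y i j = 1` if `j = i + 1`, `y i j = t` if `(i,j) = (e-1, 0)`,
and `0` otherwise. -/
def yMat (R K : Type*) [CommRing R] [Field K] [Algebra R K] (t : R) (e : ℕ) :
    Matrix (Fin e) (Fin e) K :=
  Matrix.of fun i j =>
    if (j : ℕ) = (i : ℕ) + 1 then 1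
    else if (i : ℕ) = e - 1 ∧ (j : ℕ) = 0 then algebraMap R K t
    else 0

/-- The trace dual `ω` of `Δ`: matrices `M` with `trace (M * N)` in the image of
`R` for all `N ∈ Δ`. -/
def traceDualSet (R K : Type*) [CommRing R] [Field K] [Algebra R K]
    (t : R) (e : ℕ) : Set (Matrix (Fin e) (Fin e) K) :=
  {M | ∀ N ∈ stdHereditaryOrder R K t e,
    ∃ r : R, algebraMap R K r = Matrix.trace (M * N)}

section Helpers
variable {R K : Type*} [CommRing R] [Field K] [Algebra R K] (t : R) {e : ℕ}

lemma yMat_mul_apply (M : Matrix (Fin e) (Fin e) K) (i j : Fin e) :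
    (yMat R K t e * M) i j =
      if h : (i : ℕ) + 1 < e then M ⟨(i:ℕ)+1, h⟩ j
      else algebraMap R K t * M ⟨0, i.pos⟩ j := by
  rw [Matrix.mul_apply]
  by_cases h : (i:ℕ) + 1 < e
  · rw [dif_pos h]
    rw [Finset.sum_eq_single (⟨(i:ℕ)+1, h⟩ : Fin e)]
    · simp [yMat]
    · intro b _ hb
      have hb' : (b:ℕ) ≠ (i:ℕ)+1 := fun hc => hb (Fin.ext hc)
      have hy : yMat R K t e i b = 0 := by
        simp only [yMat, Matrix.of_apply]
        rw [if_neg hb', if_neg]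
        rintro ⟨h1, _⟩
        have := i.isLt
        omega
      rw [hy, zero_mul]
    · simp
  · rw [dif_neg h]
    have hie : (i:ℕ) = e - 1 := by have := i.isLt; omega
    rw [Finset.sum_eq_single (⟨0, i.pos⟩ : Fin e)]
    · have hy : yMat R K t e i ⟨0, i.pos⟩ = algebraMap R K t := by
        simp only [yMat, Matrix.of_apply]
        split_ifs <;> simp_all
      rw [hy]
    · intro b _ hb
      have hb0 : (b:ℕ) ≠ 0 := fun hc => hb (Fin.ext hc)
      have hy : yMat R K t e i b = 0 := by
        simp only [yMat, Matrix.of_apply]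
        rw [if_neg (by have := b.isLt; omega), if_neg (by rintro ⟨_, h2⟩; exact hb0 h2)]
      rw [hy, zero_mul]
    · simp

/-- Auxiliary explicit formula for powers of `yMat`. -/
def yPowMat (R K : Type*) [CommRing R] [Field K] [Algebra R K] (t : R) (e k : ℕ) :
    Matrix (Fin e) (Fin e) K :=
  Matrix.of fun i j =>
    if (j:ℕ) = (i:ℕ) + k then 1
    else if (j:ℕ) + e = (i:ℕ) + k then algebraMap R K t else 0

lemma yMat_pow (k : ℕ) (hk : k ≤ e) : yMat R K t e ^ k = yPowMat R K t e k := by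
  induction k with
  | zero =>
    ext i j
    simp only [pow_zero, yPowMat, Matrix.of_apply, Matrix.one_apply, Fin.ext_iff]
    have hi := i.isLt; have hj := j.isLt
    split_ifs <;> first | rfl | omega
  | succ k ih =>
    rw [pow_succ', ih (by omega)]
    ext i j
    rw [yMat_mul_apply]
    have hi := i.isLt; have hj := j.isLt
    by_cases h : (i:ℕ) + 1 < e
    · rw [dif_pos h]
      simp only [yPowMat, Matrix.of_apply]
      split_ifs <;> first | rfl | omega
    · rw [dif_neg h]
      simp only [yPowMat, Matrix.of_apply]
      split_ifs <;> first | omega | simp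

lemma trace_mul_apply (M N : Matrix (Fin e) (Fin e) K) :
    Matrix.trace (M * N) = ∑ a, ∑ b, M a b * N b a := by
  simp [Matrix.trace, Matrix.diag, Matrix.mul_apply]

/-- Elementary matrix with entry `c` at `(j, i)`. -/
def sbm (j i : Fin e) (c : K) : Matrix (Fin e) (Fin e) K :=
  Matrix.of fun a b => if a = j ∧ b = i then c else 0

lemma trace_mul_sbm (M : Matrix (Fin e) (Fin e) K) (j i : Fin e) (c : K) :
    Matrix.trace (M * sbm j i c) = M i j * c := by
  rw [trace_mul_apply]
  rw [Finset.sum_eq_single i]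
  · rw [Finset.sum_eq_single j]
    · simp [sbm]
    · intro b _ hb; simp [sbm, hb]
    · simp
  · intro a _ ha
    apply Finset.sum_eq_zero
    intro b _
    simp [sbm, ha]
  · simp

lemma sbm_mem (j i : Fin e) (x : R) (h : ¬ (i:ℕ) < (j:ℕ)) :
    sbm j i (algebraMap R K x) ∈ stdHereditaryOrder R K t e := by
  intro a b
  simp only [sbm, Matrix.of_apply]
  split_ifs with h1 h2 h3
  · exact absurd (by obtain ⟨rfl, rfl⟩ := h2; exact h1) h
  · exact ⟨0, by simp⟩
  · obtain ⟨rfl, rfl⟩ := h3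
    exact ⟨x, rfl⟩
  · exact ⟨0, by simp⟩

lemma sbm_t_mem (j i : Fin e) :
    sbm j i (algebraMap R K t) ∈ stdHereditaryOrder R K t e := by
  intro a b
  simp only [sbm, Matrix.of_apply]
  split_ifs
  · exact ⟨1, by rw [mul_one]⟩
  · exact ⟨0, by simp⟩
  · exact ⟨t, rfl⟩
  · exact ⟨0, by simp⟩

end Helpers

/-- The trace dual `ω` of the standard hereditary order `Δ` equals the set of
matrices with `(i,j)` entry in `t⁻¹·R` for `i < j` and in `R` otherwise; moreover
`ω = y^(1-e) · Δ` for the invertible matrix `y`. -/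
theorem traceDual_stdHereditaryOrder (R K : Type*) [CommRing R] [IsDomain R]
    [IsDiscreteValuationRing R] [Field K] [Algebra R K] [IsFractionRing R K]
    (t : R) (ht : Ideal.span {t} = IsLocalRing.maximalIdeal R)
    (e : ℕ) (he : 1 ≤ e) :
    traceDualSet R K t e
      = {M : Matrix (Fin e) (Fin e) K | ∀ i j : Fin e,
          if (i : ℕ) < (j : ℕ) then
            ∃ r : R, (algebraMap R K t)⁻¹ * algebraMap R K r = M i j
          else ∃ r : R, algebraMap R K r = M i j} ∧
    IsUnit (yMat R K t e) ∧
    ∀ u : (Matrix (Fin e) (Fin e) K)ˣ, (u : Matrix (Fin e) (Fin e) K) = yMat R K t e →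
      traceDualSet R K t e
        = (fun M => ((u ^ ((1 : ℤ) - (e : ℤ)) : (Matrix (Fin e) (Fin e) K)ˣ) :
            Matrix (Fin e) (Fin e) K) * M) '' stdHereditaryOrder R K t e := by
  have ht0 : t ≠ 0 := by
    intro h0
    apply IsDiscreteValuationRing.not_a_field R
    rw [← ht, h0, Ideal.span_singleton_eq_bot.mpr rfl]
  have hAt : algebraMap R K t ≠ 0 :=
    (map_ne_zero_iff _ (IsFractionRing.injective R K)).mpr ht0
  have cancel : ∀ x : K, (algebraMap R K t)⁻¹ * (algebraMap R K t * x) = x := fun x => by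
    rw [← mul_assoc, inv_mul_cancel₀ hAt, one_mul]
  have cancel2 : ∀ x : K, algebraMap R K t * ((algebraMap R K t)⁻¹ * x) = x := fun x => by
    rw [← mul_assoc, mul_inv_cancel₀ hAt, one_mul]
  -- Part 1
  have hpart1 : traceDualSet R K t e
      = {M : Matrix (Fin e) (Fin e) K | ∀ i j : Fin e,
          if (i : ℕ) < (j : ℕ) then
            ∃ r : R, (algebraMap R K t)⁻¹ * algebraMap R K r = M i j
          else ∃ r : R, algebraMap R K r = M i j} := by
    ext M
    constructor
    · intro hM i j
      by_cases hij : (i:ℕ) < (j:ℕ)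
      · rw [if_pos hij]
        obtain ⟨r, hr⟩ := hM (sbm j i (algebraMap R K t)) (sbm_t_mem t j i)
        rw [trace_mul_sbm] at hr
        refine ⟨r, ?_⟩
        rw [hr, mul_comm (M i j), ← mul_assoc, inv_mul_cancel₀ hAt, one_mul]
      · rw [if_neg hij]
        obtain ⟨r, hr⟩ := hM (sbm j i (algebraMap R K 1)) (sbm_mem t j i 1 hij)
        rw [trace_mul_sbm, map_one, mul_one] at hr
        exact ⟨r, hr⟩
    · intro hM N hN
      have key : Matrix.trace (M * N) ∈ (algebraMap R K).range := by
        rw [trace_mul_apply]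
        refine Subring.sum_mem _ fun a _ => Subring.sum_mem _ fun b _ => ?_
        have h1 := hM a b
        have h2 := hN b a
        rw [RingHom.mem_range]
        by_cases hab : (a:ℕ) < (b:ℕ)
        · rw [if_pos hab] at h1 h2
          obtain ⟨r1, hr1⟩ := h1
          obtain ⟨r2, hr2⟩ := h2
          refine ⟨r1 * r2, ?_⟩
          rw [← hr1, ← hr2, map_mul, map_mul]
          field_simp
        · rw [if_neg hab] at h1 h2
          obtain ⟨r1, hr1⟩ := h1
          obtain ⟨r2, hr2⟩ := h2
          exact ⟨r1 * r2, by rw [← hr1, ← hr2, map_mul]⟩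
      obtain ⟨r, hr⟩ := RingHom.mem_range.mp key
      exact ⟨r, hr⟩
  -- Part 2
  have hsub : e - 1 + 1 = e := Nat.succ_pred_eq_of_pos he
  have hye : yMat R K t e ^ e = algebraMap R K t • (1 : Matrix (Fin e) (Fin e) K) := by
    rw [yMat_pow t e le_rfl]
    ext i j
    simp only [yPowMat, Matrix.of_apply, Matrix.smul_apply, Matrix.one_apply, smul_eq_mul,
      Fin.ext_iff]
    have hi := i.isLt; have hj := j.isLt
    split_ifs <;> first | omega | simp
  have hz1 : yMat R K t e * ((algebraMap R K t)⁻¹ • yMat R K t e ^ (e-1)) = 1 := by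
    rw [Matrix.mul_smul, ← pow_succ', hsub, hye, smul_smul, inv_mul_cancel₀ hAt, one_smul]
  have hz2 : ((algebraMap R K t)⁻¹ • yMat R K t e ^ (e-1)) * yMat R K t e = 1 := by
    rw [Matrix.smul_mul, ← pow_succ, hsub, hye, smul_smul, inv_mul_cancel₀ hAt, one_smul]
  have hyu : IsUnit (yMat R K t e) := ⟨⟨_, _, hz1, hz2⟩, rfl⟩
  refine ⟨hpart1, hyu, ?_⟩
  -- Part 3
  intro u hu
  have hval : ((u ^ ((1:ℤ) - (e:ℤ)) : (Matrix (Fin e) (Fin e) K)ˣ) :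
      Matrix (Fin e) (Fin e) K) = (algebraMap R K t)⁻¹ • yMat R K t e := by
    have hz : (1:ℤ) - (e:ℤ) = -((e-1 : ℕ) : ℤ) := by omega
    rw [hz, zpow_neg, zpow_natCast]
    apply Units.inv_eq_of_mul_eq_one_right
    rw [Units.val_pow_eq_pow_val, hu, Matrix.mul_smul, ← pow_succ, hsub, hye, smul_smul,
      inv_mul_cancel₀ hAt, one_smul]
  rw [hpart1]
  simp only [hval]
  ext W
  have Wcongr : ∀ (a b : Fin e), (a:ℕ) = (b:ℕ) → W a = W b := fun a b h => by
    rw [Fin.ext h]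
  constructor
  · intro hW
    refine ⟨Matrix.of fun i j =>
        if (i:ℕ) = 0 then W ⟨e-1, by omega⟩ j
        else algebraMap R K t * W ⟨(i:ℕ)-1, Nat.lt_of_le_of_lt (Nat.sub_le _ _) i.isLt⟩ j,
      ?_, ?_⟩
    · intro a b
      have ha1 : (a:ℕ) - 1 < e := Nat.lt_of_le_of_lt (Nat.sub_le _ _) a.isLt
      have he1 : e - 1 < e := by omega
      simp only [Matrix.of_apply]
      split_ifs with h1 h2 h3
      · exfalso; omega
      · have h2' := hW ⟨(a:ℕ)-1, ha1⟩ b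
        simp only [show ((⟨(a:ℕ)-1, ha1⟩ : Fin e) : ℕ) = (a:ℕ)-1 from rfl] at h2'
        rw [if_neg (by omega)] at h2'
        obtain ⟨r, hr⟩ := h2'
        exact ⟨r, by rw [map_mul, hr]⟩
      · have h2' := hW ⟨e-1, he1⟩ b
        simp only [show ((⟨e-1, he1⟩ : Fin e) : ℕ) = e-1 from rfl] at h2'
        rw [if_neg (by have := b.isLt; omega)] at h2'
        exact h2'
      · have h2' := hW ⟨(a:ℕ)-1, ha1⟩ b
        simp only [show ((⟨(a:ℕ)-1, ha1⟩ : Fin e) : ℕ) = (a:ℕ)-1 from rfl] at h2'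
        by_cases hc : (a:ℕ)-1 < (b:ℕ)
        · rw [if_pos hc] at h2'
          obtain ⟨r, hr⟩ := h2'
          exact ⟨r, by rw [← hr, cancel2]⟩
        · rw [if_neg hc] at h2'
          obtain ⟨r, hr⟩ := h2'
          exact ⟨t * r, by rw [map_mul, hr]⟩
    · show ((algebraMap R K t)⁻¹ • yMat R K t e) * _ = W
      ext i j
      rw [Matrix.smul_mul, Matrix.smul_apply, yMat_mul_apply, smul_eq_mul]
      by_cases h : (i:ℕ)+1 < e
      · rw [dif_pos h]
        simp only [Matrix.of_apply,
          show ((⟨(i:ℕ)+1, h⟩ : Fin e) : ℕ) = (i:ℕ)+1 from rfl]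
        rw [if_neg (by omega), cancel]
        exact congrFun (Wcongr _ i (show (i:ℕ)+1-1 = (i:ℕ) by omega)) j
      · rw [dif_neg h]
        simp only [Matrix.of_apply, show ((⟨0, i.pos⟩ : Fin e) : ℕ) = 0 from rfl]
        simp only [if_true]
        rw [cancel]
        exact congrFun (Wcongr _ i (show e-1 = (i:ℕ) by have := i.isLt; omega)) j
  · rintro ⟨M, hM, rfl⟩
    intro i j
    simp only [Matrix.smul_mul, Matrix.smul_apply, smul_eq_mul, yMat_mul_apply]
    by_cases h : (i:ℕ)+1 < e
    · rw [dif_pos h]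
      have h2 := hM ⟨(i:ℕ)+1, h⟩ j
      simp only [show ((⟨(i:ℕ)+1, h⟩ : Fin e) : ℕ) = (i:ℕ)+1 from rfl] at h2
      by_cases hij : (i:ℕ) < (j:ℕ)
      · rw [if_pos hij]
        rw [if_neg (by omega)] at h2
        obtain ⟨r, hr⟩ := h2
        exact ⟨r, by rw [hr]⟩
      · rw [if_neg hij]
        rw [if_pos (by omega)] at h2
        obtain ⟨r, hr⟩ := h2
        refine ⟨r, ?_⟩
        rw [← hr, map_mul, cancel]
    · rw [dif_neg h]
      rw [if_neg (by have := j.isLt; omega)]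
      have h2 := hM ⟨0, i.pos⟩ j
      simp only [show ((⟨0, i.pos⟩ : Fin e) : ℕ) = 0 from rfl] at h2
      rw [if_neg (by omega)] at h2
      obtain ⟨r, hr⟩ := h2
      exact ⟨r, by rw [← hr, cancel]⟩
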